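/- In the active sensing setup, suppose the waveform matrix S satisfies rank(S)·N_rx ≥ N_Σ. Then krank(B) = N_Σ if and only if both krank(A) = N_Σ and rank((S ⊗ I_{N_rx})·Υ) = N_Σ, where B = (S·A_tx) ⊙ A_rx. -/

import Mathlib

open scoped Kronecker

/-- The Kruskal rank of a complex matrix `M`: the largest integer `r` such that
every set of `r` columns of `M` is linearly independent. -/
noncomputable def krank {m n : Type*} [Fintype m] [Fintype n] (M : Matrix m n ℂ) : ℕ :=
  sSup {r : ℕ | r ≤ Fintype.card n ∧
    ∀ s : Finset n, s.card = r → LinearIndependent ℂ (fun j : s => M.transpose (j : n))}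

/-- The Khatri-Rao (columnwise Kronecker) product. -/
def khatriRao {p q V : Type*} (A : Matrix p V ℂ) (B : Matrix q V ℂ) :
    Matrix (p × q) V ℂ :=
  Matrix.of fun nm i => A nm.1 i * B nm.2 i

private lemma col_mul {ρ n V : Type*} [Fintype ρ] [Fintype n] [Fintype V]
    (M : Matrix ρ n ℂ) (A : Matrix n V ℂ) (j : V) :
    (M * A).transpose j = M.mulVecLin (A.transpose j) := by
  ext p
  simp [Matrix.mul_apply, Matrix.mulVec, dotProduct, Matrix.mulVecLin_apply,
    Matrix.transpose_apply]

private lemma zero_mem_KS {p q : Type*} [Fintype p] [Fintype q] (B : Matrix p q ℂ) :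
    0 ∈ {r : ℕ | r ≤ Fintype.card q ∧
      ∀ s : Finset q, s.card = r →
        LinearIndependent ℂ (fun j : s => B.transpose (j : q))} := by
  refine ⟨Nat.zero_le _, fun s hs => ?_⟩
  haveI : IsEmpty s := by
    rw [Finset.card_eq_zero] at hs
    subst hs
    exact ⟨fun x => Finset.notMem_empty _ x.2⟩
  exact linearIndependent_empty_type

private lemma krank_eq_iff {p q : Type*} [Fintype p] [Fintype q] (B : Matrix p q ℂ) (r : ℕ)
    (hub : ∀ k, k ≤ Fintype.card q →
      (∀ s : Finset q, s.card = k →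
        LinearIndependent ℂ (fun j : s => B.transpose (j : q))) → k ≤ r) :
    krank B = r ↔ r ≤ Fintype.card q ∧
      ∀ s : Finset q, s.card = r →
        LinearIndependent ℂ (fun j : s => B.transpose (j : q)) := by
  have hne : Set.Nonempty {r : ℕ | r ≤ Fintype.card q ∧
      ∀ s : Finset q, s.card = r →
        LinearIndependent ℂ (fun j : s => B.transpose (j : q))} := ⟨0, zero_mem_KS B⟩
  have hbdd : BddAbove {r : ℕ | r ≤ Fintype.card q ∧
      ∀ s : Finset q, s.card = r →
        LinearIndependent ℂ (fun j : s => B.transpose (j : q))} :=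
    ⟨Fintype.card q, fun k hk => hk.1⟩
  constructor
  · intro h
    have hm := Nat.sSup_mem hne hbdd
    rw [show sSup _ = r from h] at hm
    exact hm
  · intro h
    exact le_antisymm (csSup_le hne (fun k hk => hub k hk.1 hk.2)) (le_csSup hbdd h)

private lemma card_le_of_li {n V : Type*} [Fintype n] [Fintype V]
    (A : Matrix n V ℂ) (s : Finset V)
    (h : LinearIndependent ℂ (fun j : s => A.transpose (j : V))) :
    s.card ≤ Fintype.card n := by
  have := h.fintype_card_le_finrank
  simpa [Module.finrank_pi, Fintype.card_coe] using this

private lemma key_iff {ρ n V : Type*} [Fintype ρ] [Fintype n] [Fintype V]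
    (M : Matrix ρ n ℂ) (A : Matrix n V ℂ) :
    krank (M * A) = Fintype.card n ↔
      krank A = Fintype.card n ∧ M.rank = Fintype.card n := by
  set N := Fintype.card n with hN
  have hcols : ∀ s : Finset V,
      (fun j : s => (M * A).transpose (j : V)) =
        M.mulVecLin ∘ (fun j : s => A.transpose (j : V)) :=
    fun s => funext fun j => col_mul M A j
  have hubA : ∀ k, k ≤ Fintype.card V →
      (∀ s : Finset V, s.card = k →
        LinearIndependent ℂ (fun j : s => A.transpose (j : V))) → k ≤ N := by
    intro k hk hli
    obtain ⟨s, -, hs⟩ := Finset.exists_subset_card_eq (s := Finset.univ) (n := k) (by simpa using hk)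
    exact hs ▸ card_le_of_li A s (hli s hs)
  have hubMA : ∀ k, k ≤ Fintype.card V →
      (∀ s : Finset V, s.card = k →
        LinearIndependent ℂ (fun j : s => (M * A).transpose (j : V))) → k ≤ N := by
    intro k hk hli
    obtain ⟨s, -, hs⟩ := Finset.exists_subset_card_eq (s := Finset.univ) (n := k) (by simpa using hk)
    have h := hli s hs
    rw [hcols s] at h
    exact hs ▸ card_le_of_li A s (h.of_comp M.mulVecLin)
  rw [krank_eq_iff _ _ hubMA, krank_eq_iff _ _ hubA]
  constructor
  · rintro ⟨hVc, hPB⟩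
    have hrank : M.rank = N := by
      refine le_antisymm M.rank_le_card_width ?_
      obtain ⟨s, -, hs⟩ := Finset.exists_subset_card_eq (s := Finset.univ) (n := N) (by simpa using hVc)
      have h := hPB s hs
      rw [hcols s] at h
      have h' : LinearIndependent ℂ
          (fun j : s => (⟨M.mulVecLin (A.transpose (j : V)),
            LinearMap.mem_range_self _ _⟩ : LinearMap.range M.mulVecLin)) := by
        apply LinearIndependent.of_comp (LinearMap.range M.mulVecLin).subtype
        exact h
      have hc := h'.fintype_card_le_finrank
      rw [Fintype.card_coe, hs] at hc
      exact hc.trans_eq rfl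
    refine ⟨⟨hVc, fun s hs => ?_⟩, hrank⟩
    have h := hPB s hs
    rw [hcols s] at h
    exact h.of_comp M.mulVecLin
  · rintro ⟨⟨hVc, hPA⟩, hrank⟩
    have hker : LinearMap.ker M.mulVecLin = ⊥ := by
      have h1 := LinearMap.finrank_range_add_finrank_ker M.mulVecLin
      rw [Module.finrank_pi] at h1
      have h2 : Matrix.rank M + Module.finrank ℂ (LinearMap.ker M.mulVecLin) = N := h1
      rw [hrank] at h2
      have h0 : Module.finrank ℂ (LinearMap.ker M.mulVecLin) = 0 := by omega
      exact Submodule.finrank_eq_zero.mp h0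
    refine ⟨hVc, fun s hs => ?_⟩
    rw [hcols s]
    exact (hPA s hs).map' M.mulVecLin hker

/-- in the redundancy-limited waveform-rank regime `rank S · N_rx ≥ N_Σ`,
`krank B = N_Σ` iff `krank A = N_Σ` and `rank ((S ⊗ I) Υ) = N_Σ`. -/
theorem stmt_5 (Ntx Nrx T V Nsum : ℕ)
    (hNtx : 0 < Ntx) (hNrx : 0 < Nrx) (hT : 0 < T) (hV : 0 < V)
    (dtx : Fin Ntx → ℤ) (drx : Fin Nrx → ℤ)
    (hdtx0 : dtx ⟨0, hNtx⟩ = 0) (hdtxMono : StrictMono dtx)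
    (hdrx0 : drx ⟨0, hNrx⟩ = 0) (hdrxMono : StrictMono drx)
    (θ : Fin V → ℝ) (hθinj : Function.Injective θ)
    (hθrange : ∀ i, θ i ∈ Set.Ico (-(Real.pi / 2)) (Real.pi / 2))
    (Atx : Matrix (Fin Ntx) (Fin V) ℂ)
    (hAtx : ∀ n i, Atx n i =
      Complex.exp (Complex.I * Real.pi * (dtx n : ℂ) * (Real.sin (θ i) : ℂ)))
    (Arx : Matrix (Fin Nrx) (Fin V) ℂ)
    (hArx : ∀ m i, Arx m i =
      Complex.exp (Complex.I * Real.pi * (drx m : ℂ) * (Real.sin (θ i) : ℂ)))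
    (dSig : Fin Nsum → ℤ) (hdSigMono : StrictMono dSig)
    (hdSigrange : ∀ z : ℤ, (∃ ℓ, dSig ℓ = z) ↔ ∃ n m, dtx n + drx m = z)
    (A : Matrix (Fin Nsum) (Fin V) ℂ)
    (hA : ∀ ℓ i, A ℓ i =
      Complex.exp (Complex.I * Real.pi * (dSig ℓ : ℂ) * (Real.sin (θ i) : ℂ)))
    (Υ : Matrix (Fin Ntx × Fin Nrx) (Fin Nsum) ℂ)
    (hΥ : ∀ n m ℓ, Υ (n, m) ℓ = if dtx n + drx m = dSig ℓ then 1 else 0)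
    (S : Matrix (Fin T) (Fin Ntx) ℂ)
    (hWR : Nsum ≤ S.rank * Nrx) :
    krank (khatriRao (S * Atx) Arx) = Nsum ↔
      krank A = Nsum ∧
        ((S ⊗ₖ (1 : Matrix (Fin Nrx) (Fin Nrx) ℂ)) * Υ).rank = Nsum := by
  have hBeq : khatriRao (S * Atx) Arx =
      ((S ⊗ₖ (1 : Matrix (Fin Nrx) (Fin Nrx) ℂ)) * Υ) * A := by
    have hUA : Υ * A = khatriRao Atx Arx := by
      ext km i
      obtain ⟨k, m⟩ := km
      obtain ⟨ℓ₀, hℓ₀⟩ := (hdSigrange (dtx k + drx m)).mpr ⟨k, m, rfl⟩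
      simp only [Matrix.mul_apply, khatriRao, Matrix.of_apply]
      rw [Finset.sum_eq_single ℓ₀]
      · rw [hΥ, if_pos hℓ₀.symm, one_mul, hA, hAtx, hArx, ← Complex.exp_add]
        congr 1
        rw [hℓ₀]
        push_cast
        ring
      · intro b _ hb
        have hne : dtx k + drx m ≠ dSig b := fun h =>
          hb (hdSigMono.injective (hℓ₀.trans h)).symm
        rw [hΥ, if_neg hne, zero_mul]
      · intro h
        exact absurd (Finset.mem_univ ℓ₀) h
    rw [Matrix.mul_assoc, hUA]
    ext tm i
    obtain ⟨t, m⟩ := tm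
    simp only [Matrix.mul_apply, khatriRao, Matrix.of_apply, Matrix.kroneckerMap_apply,
      Fintype.sum_prod_type, Matrix.one_apply, mul_ite, mul_one, mul_zero, ite_mul, zero_mul,
      Finset.sum_ite_eq, Finset.mem_univ, if_true]
    rw [Finset.sum_mul]
    exact Finset.sum_congr rfl fun k _ => by ring
  rw [hBeq]
  have h := key_iff ((S ⊗ₖ (1 : Matrix (Fin Nrx) (Fin Nrx) ℂ)) * Υ) A
  simpa [Fintype.card_fin] using h
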